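/- Let p be a prime, U_{p+1} the unitriangular (p+1)×(p+1) matrices over ℤ/p, and let A = I + a·(E_{1,2}+...+E_{p-1,p}) + a'·E_{p,p+1} and B = I + b·(E_{1,2}+...+E_{p-1,p}) + b'·E_{p,p+1}. Then the commutator [B,A] = B⁻¹A⁻¹BA has all entries equal to those of the identity except possibly in the last column, and the (1,p+1)-entry pattern is governed by the quantity s = ab' - a'b: if s = 0 then [B,A] ∈ I + (span of E_{h,p+1}, 1 ≤ h ≤ p-1) with coefficients all multiplied by s, i.e. [B,A] = I. -/
import Mathlib

section aux
variable {p : ℕ} {R : Type*} [CommRing R]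

def Nmat (p : ℕ) (R : Type*) [CommRing R] (x x' : R) : Matrix (Fin (p+1)) (Fin (p+1)) R :=
  Matrix.of (fun (i j : Fin (p + 1)) =>
    if (j : ℕ) = (i : ℕ) + 1 then (if (i : ℕ) + 1 < p then x else x') else 0)

lemma Nmul_apply (x x' y y' : R) (i j : Fin (p+1)) :
    (Nmat p R x x' * Nmat p R y y') i j =
      if (j : ℕ) = (i : ℕ) + 2 then
        (if (i : ℕ) + 1 < p then x else x') * (if (i : ℕ) + 2 < p then y else y')
      else 0 := by
  rw [Matrix.mul_apply]
  by_cases hj : (j : ℕ) = (i : ℕ) + 2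
  · have hjlt := j.isLt
    have hi1 : (i : ℕ) + 1 < p + 1 := by omega
    rw [Finset.sum_eq_single (⟨(i:ℕ)+1, hi1⟩ : Fin (p+1))]
    · simp [Nmat, hj]
    · intro k _ hk'
      have : (k : ℕ) ≠ (i : ℕ) + 1 := fun h => hk' (Fin.ext (by simp [h]))
      simp [Nmat, this]
    · simp
  · rw [if_neg hj]
    apply Finset.sum_eq_zero
    intro k _
    simp only [Nmat, Matrix.of_apply]
    split_ifs <;> first | (exfalso; omega) | ring

lemma Ncomm {x x' y y' : R} (h : x * y' - x' * y = 0) :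
    Nmat p R x x' * Nmat p R y y' = Nmat p R y y' * Nmat p R x x' := by
  ext i j
  rw [Nmul_apply, Nmul_apply]
  split_ifs <;> first | (exfalso; omega) | ring1 | linear_combination h

lemma Ndet (x x' : R) : IsUnit ((1 + Nmat p R x x').det) := by
  have ht : (1 + Nmat p R x x').BlockTriangular id := by
    intro i j hij
    have hij' : (j : ℕ) < (i : ℕ) := hij
    simp only [Matrix.add_apply, Matrix.one_apply, Nmat, Matrix.of_apply]
    rw [if_neg (by omega : ¬ (j : ℕ) = (i : ℕ) + 1), if_neg]
    · ring
    · intro h; rw [h] at hij'; omega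
  rw [Matrix.det_of_upperTriangular ht]
  have : ∀ i : Fin (p+1), (1 + Nmat p R x x') i i = 1 := by
    intro i
    simp [Matrix.add_apply, Matrix.one_apply, Nmat]
  simp [this]

end aux

/-- Let `A = I + a·(E_{1,2} + ⋯ + E_{p-1,p}) + a'·E_{p,p+1}` and
`B = I + b·(E_{1,2} + ⋯ + E_{p-1,p}) + b'·E_{p,p+1}` in the unitriangular group `U_{p+1}`
over `ℤ/p`. If `s = ab' - a'b = 0`, then the commutator `[B,A] = B⁻¹A⁻¹BA` equals the
identity matrix. -/
theorem stmt12 (p : ℕ) [Fact p.Prime] (a a' b b' : ZMod p)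
    (hs : a * b' - a' * b = 0) :
    let A : Matrix (Fin (p + 1)) (Fin (p + 1)) (ZMod p) :=
      1 + Matrix.of (fun (i j : Fin (p + 1)) =>
        if (j : ℕ) = (i : ℕ) + 1 then (if (i : ℕ) + 1 < p then a else a') else 0)
    let B : Matrix (Fin (p + 1)) (Fin (p + 1)) (ZMod p) :=
      1 + Matrix.of (fun (i j : Fin (p + 1)) =>
        if (j : ℕ) = (i : ℕ) + 1 then (if (i : ℕ) + 1 < p then b else b') else 0)
    B⁻¹ * A⁻¹ * B * A = 1 := by
  intro A B
  have hA : A = 1 + Nmat p (ZMod p) a a' := rfl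
  have hB : B = 1 + Nmat p (ZMod p) b b' := rfl
  have e1 : ∀ (X Y : Matrix (Fin (p+1)) (Fin (p+1)) (ZMod p)),
      (1+X)*(1+Y) = 1 + (X + Y) + X*Y := by intros; noncomm_ring
  have hAB : A * B = B * A := by
    rw [hA, hB, e1, e1, Ncomm hs, add_comm (Nmat p (ZMod p) a a')]
  have hdA : IsUnit A.det := hA ▸ Ndet a a'
  have hdB : IsUnit B.det := hB ▸ Ndet b b'
  calc B⁻¹ * A⁻¹ * B * A = B⁻¹ * (A⁻¹ * (A * B)) := by rw [hAB]; noncomm_ring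
    _ = B⁻¹ * B := by rw [← mul_assoc A⁻¹, Matrix.nonsing_inv_mul A hdA, one_mul]
    _ = 1 := Matrix.nonsing_inv_mul B hdB
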